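/- For every natural number n and all functions t, c : Fin n → ℝ, one has ∑_{i} ∑_{j} c(i)·c(j)/cosh(t(i)−t(j)) ≥ 0; that is, the kernel (s,t) ↦ 1/cosh(s−t) is a positive semidefinite kernel on ℝ. -/

import Mathlib

open MeasureTheory Real Set

lemma int_exp_aux (b : ℝ) (hb : 0 < b) :
    ∫ x in Set.Ioi (0:ℝ), Real.exp (-b * x) = 1 / b := by
  have hderiv : ∀ x ∈ Set.Ici (0:ℝ),
      HasDerivAt (fun x => -Real.exp (-b * x) / b) (Real.exp (-b * x)) x := by
    intro x _
    have h1 : HasDerivAt (fun x : ℝ => -b * x) (-b) x :=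
      ((hasDerivAt_id x).const_mul (-b)).congr_deriv (mul_one _)
    have h2 := (Real.hasDerivAt_exp (-b * x)).comp x h1
    have h3 := h2.neg.div_const b
    exact h3.congr_deriv (by rw [mul_neg, neg_neg, mul_div_assoc, div_self hb.ne', mul_one])
  have hint : IntegrableOn (fun x => Real.exp (-b * x)) (Set.Ioi (0:ℝ)) :=
    exp_neg_integrableOn_Ioi 0 hb
  have htend : Filter.Tendsto (fun x => -Real.exp (-b * x) / b) Filter.atTop (nhds 0) := by
    have h0 : Filter.Tendsto (fun x : ℝ => b * x) Filter.atTop Filter.atTop :=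
      Filter.Tendsto.const_mul_atTop hb Filter.tendsto_id
    have h1 : Filter.Tendsto (fun x : ℝ => -b * x) Filter.atTop Filter.atBot :=
      (Filter.tendsto_neg_atTop_atBot.comp h0).congr (fun x => (neg_mul b x).symm)
    have h2 := (Real.tendsto_exp_atBot.comp h1)
    have h3 := (h2.neg.div_const b)
    simpa using h3
  have := integral_Ioi_of_hasDerivAt_of_tendsto' hderiv hint htend
  rw [this]
  field_simp
  simp

lemma sum_div_add_nonneg (n : ℕ) (x d : Fin n → ℝ) (hx : ∀ i, 0 < x i) :
    0 ≤ ∑ i : Fin n, ∑ j : Fin n, d i * d j / (x i + x j) := by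
  set F : Fin n → ℝ → ℝ := fun i u => d i * Real.exp (-x i * u) with hF
  have hintF : ∀ i j : Fin n, IntegrableOn (fun u => F i u * F j u) (Set.Ioi (0:ℝ)) := by
    intro i j
    have : (fun u => F i u * F j u)
        = fun u => (d i * d j) * Real.exp (-(x i + x j) * u) := by
      funext u
      simp only [hF]
      rw [show (-(x i + x j) * u) = (-x i * u) + (-x j * u) by ring, Real.exp_add]
      ring
    rw [this]
    exact (exp_neg_integrableOn_Ioi 0 (by have := hx i; have := hx j; positivity)).const_mul _
  have hterm : ∀ i j : Fin n,
      d i * d j / (x i + x j) = ∫ u in Set.Ioi (0:ℝ), F i u * F j u := by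
    intro i j
    have hpos : 0 < x i + x j := by have := hx i; have := hx j; positivity
    have : (fun u => F i u * F j u)
        = fun u => (d i * d j) * Real.exp (-(x i + x j) * u) := by
      funext u
      simp only [hF]
      rw [show (-(x i + x j) * u) = (-x i * u) + (-x j * u) by ring, Real.exp_add]
      ring
    rw [this, MeasureTheory.integral_const_mul, int_exp_aux _ hpos]
    ring
  calc (0:ℝ) ≤ ∫ u in Set.Ioi (0:ℝ), (∑ i : Fin n, F i u)^2 :=
        setIntegral_nonneg measurableSet_Ioi (fun u _ => sq_nonneg _)
    _ = ∫ u in Set.Ioi (0:ℝ), ∑ i : Fin n, ∑ j : Fin n, F i u * F j u := by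
        congr 1; funext u
        rw [sq, Finset.sum_mul_sum]
    _ = ∑ i : Fin n, ∑ j : Fin n, ∫ u in Set.Ioi (0:ℝ), F i u * F j u := by
        rw [MeasureTheory.integral_finset_sum _ (fun i _ =>
          MeasureTheory.integrable_finset_sum _ (fun j _ => hintF i j))]
        exact Finset.sum_congr rfl fun i _ =>
          MeasureTheory.integral_finset_sum _ (fun j _ => hintF i j)
    _ = ∑ i : Fin n, ∑ j : Fin n, d i * d j / (x i + x j) := by
        exact Finset.sum_congr rfl fun i _ => Finset.sum_congr rfl fun j _ => (hterm i j).symm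

/-- The kernel `(s,t) ↦ 1/cosh(s−t)` is positive semidefinite on `ℝ`: for every `n`
and all `t, c : Fin n → ℝ`, `∑ᵢ∑ⱼ cᵢ·cⱼ/cosh(tᵢ−tⱼ) ≥ 0`. -/
theorem stmt13 (n : ℕ) (t c : Fin n → ℝ) :
    0 ≤ ∑ i : Fin n, ∑ j : Fin n, c i * c j / Real.cosh (t i - t j) := by
  have key := sum_div_add_nonneg n (fun i => Real.exp (2 * t i))
    (fun i => Real.sqrt 2 * c i * Real.exp (t i)) (fun i => Real.exp_pos _)
  have heq : ∀ i j : Fin n,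
      (Real.sqrt 2 * c i * Real.exp (t i)) * (Real.sqrt 2 * c j * Real.exp (t j)) /
        (Real.exp (2 * t i) + Real.exp (2 * t j))
      = c i * c j / Real.cosh (t i - t j) := by
    intro i j
    have hs2 : Real.sqrt 2 * Real.sqrt 2 = 2 := Real.mul_self_sqrt (by norm_num)
    have hcosh : Real.cosh (t i - t j)
        = (Real.exp (2 * t i) + Real.exp (2 * t j)) / (2 * (Real.exp (t i) * Real.exp (t j))) := by
      rw [Real.cosh_eq, neg_sub]
      rw [show (2:ℝ) * t i = t i + t i by ring, show (2:ℝ) * t j = t j + t j by ring,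
        Real.exp_add, Real.exp_add, Real.exp_sub, Real.exp_sub]
      have hi := (Real.exp_pos (t i)).ne'
      have hj := (Real.exp_pos (t j)).ne'
      field_simp
    rw [hcosh]
    have h1 : (0:ℝ) < Real.exp (2 * t i) + Real.exp (2 * t j) := by positivity
    have h2 : (0:ℝ) < Real.exp (t i) * Real.exp (t j) := by positivity
    rw [div_div_eq_mul_div]
    rw [div_eq_div_iff h1.ne' h1.ne']
    linear_combination (c i * c j * Real.exp (t i) * Real.exp (t j) *
      (Real.exp (2 * t i) + Real.exp (2 * t j))) * hs2
  calc (0:ℝ) ≤ _ := key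
    _ = ∑ i : Fin n, ∑ j : Fin n, c i * c j / Real.cosh (t i - t j) :=
      Finset.sum_congr rfl fun i _ => Finset.sum_congr rfl fun j _ => heq i j
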